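/- arXiv:math/0511083 — 2 statements merged into one kernel-verified Lean document; each statement's English description precedes it below -/
import Mathlib

section
/- Let G be a non-elementary GBS group which is not unimodular, and let α : G → G be an injective group endomorphism. Then the Reidemeister number R(α) is infinite: there are infinitely many α-twisted conjugacy classes in G. -/
/-- A GBS (generalized Baumslag–Solitar) tree for a group `G`: a locally finite simplicial
tree on which `G` acts by graph automorphisms without inversions, minimally, with all vertex
and edge stabilizers infinite cyclic. -/
structure GBSTree (G : Type) [Group G] : Type 1 where
  V : Type
  graph : SimpleGraph V
  isTree : graph.IsTree
  locallyFinite : ∀ v : V, (graph.neighborSet v).Finite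
  act : G → V → V
  act_one : ∀ v, act 1 v = v
  act_mul : ∀ g h v, act (g * h) v = act g (act h v)
  act_adj : ∀ g v w, graph.Adj v w → graph.Adj (act g v) (act g w)
  no_inversions : ∀ g v w, graph.Adj v w → ¬(act g v = w ∧ act g w = v)
  minimal : ∀ S : Set V, S.Nonempty → (∀ g, ∀ v ∈ S, act g v ∈ S) →
    (graph.induce S).Connected → S = Set.univ
  vertex_stab_infinite_cyclic : ∀ v : V, ∃ a : G, ¬ IsOfFinOrder a ∧
    ∀ g : G, act g v = v ↔ g ∈ Subgroup.zpowers a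
  edge_stab_infinite_cyclic : ∀ v w : V, graph.Adj v w → ∃ a : G, ¬ IsOfFinOrder a ∧
    ∀ g : G, (act g v = v ∧ act g w = w) ↔ g ∈ Subgroup.zpowers a

set_option linter.unusedSectionVars false


open SimpleGraph

namespace GBSAux

variable {V : Type} [DecidableEq V] {g : SimpleGraph V}

/-- In a tree, any path realizes the distance. -/
lemma length_eq_dist_of_isPath (hT : g.IsTree) {u v : V} {p : g.Walk u v}
    (hp : p.IsPath) : p.length = g.dist u v := by
  obtain ⟨q, hq, hql⟩ := hT.isConnected.exists_path_of_dist u v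
  have : p = q := by
    have := hT.IsAcyclic.path_unique ⟨p, hp⟩ ⟨q, hq⟩
    exact congrArg Subtype.val this
  rw [this, hql]

lemma getVert_one_takeUntil {u v w : V} (p : g.Walk u v) (h : w ∈ p.support)
    (hw : w ≠ u) : (p.takeUntil w h).getVert 1 = p.getVert 1 := by
  have hs := (p.takeUntil w h).length
  have hspec := SimpleGraph.Walk.take_spec p h
  set t := p.takeUntil w h with ht
  set d := p.dropUntil w h with hd
  have hlen : t.length ≠ 0 := by
    intro h0
    exact hw (SimpleGraph.Walk.eq_of_length_eq_zero h0).symm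
  have := congrArg (fun q => SimpleGraph.Walk.getVert q 1) hspec
  simp only [SimpleGraph.Walk.getVert_append] at this
  rcases Nat.lt_or_ge 1 t.length with hlt | hge
  · rw [← this]; simp [hlt]
  · have h1 : t.length = 1 := Nat.le_antisymm hge (Nat.one_le_iff_ne_zero.mpr hlen)
    rw [← this]
    simp [h1, SimpleGraph.Walk.getVert_zero, ← SimpleGraph.Walk.getVert_length t, h1]

/-- In an acyclic graph, two paths starting at `b` that share a vertex other than `b`
have the same second vertex. -/
lemma getVert_one_eq_of_shared (hA : g.IsAcyclic) {a b c : V}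
    {p : g.Walk b a} {q : g.Walk b c} (hp : p.IsPath) (hq : q.IsPath)
    {w : V} (hwp : w ∈ p.support) (hwq : w ∈ q.support) (hw : w ≠ b) :
    p.getVert 1 = q.getVert 1 := by
  have h1 := hp.takeUntil hwp
  have h2 := hq.takeUntil hwq
  have := hA.path_unique ⟨p.takeUntil w hwp, h1⟩ ⟨q.takeUntil w hwq, h2⟩
  have heq : p.takeUntil w hwp = q.takeUntil w hwq := congrArg Subtype.val this
  have e1 := getVert_one_takeUntil p hwp hw
  have e2 := getVert_one_takeUntil q hwq hw
  rw [← e1, ← e2, heq]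

/-- In an acyclic graph, concatenation of two paths that do not backtrack at the
junction is a path. -/
lemma isPath_append (hA : g.IsAcyclic) {a b c : V}
    {p : g.Walk a b} {q : g.Walk b c} (hp : p.IsPath) (hq : q.IsPath)
    (hne : p.reverse.getVert 1 ≠ q.getVert 1) : (p.append q).IsPath := by
  rw [SimpleGraph.Walk.isPath_def, SimpleGraph.Walk.support_append]
  refine List.Nodup.append (hp.support_nodup) ?_ ?_
  · exact (SimpleGraph.Walk.isPath_def _ |>.mp hq).tail
  · intro w hwp hwq
    have hwq' : w ∈ q.support := List.mem_of_mem_tail hwq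
    have hwb : w ≠ b := by
      intro h; subst h
      have := (SimpleGraph.Walk.isPath_def _ |>.mp hq)
      rw [SimpleGraph.Walk.support_eq_cons] at this
      exact (List.nodup_cons.mp this).1 hwq
    have hwp' : w ∈ p.reverse.support := by
      rw [SimpleGraph.Walk.support_reverse]; exact List.mem_reverse.mpr hwp
    exact hne (getVert_one_eq_of_shared hA hp.reverse hq hwp' hwq' hwb)

end GBSAux

namespace Walks

open SimpleGraph Walk

variable {V W : Type} {g : SimpleGraph V} {g' : SimpleGraph W}

lemma getVert_copy {u v u' v' : V} (p : g.Walk u v) (hu : u = u') (hv : v = v') (i : ℕ) :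
    (p.copy hu hv).getVert i = p.getVert i := by
  subst hu; subst hv; rfl

lemma getVert_map (f : g →g g') {u v : V} (p : g.Walk u v) (i : ℕ) :
    (p.map f).getVert i = f (p.getVert i) := by
  induction p generalizing i with
  | nil => simp [Walk.getVert]
  | cons h q ih =>
    cases i with
    | zero => simp [Walk.getVert]
    | succ n => simpa [Walk.getVert] using ih n

lemma dist_getVert_add_le (hconn : g.Connected) {u v : V} (p : g.Walk u v)
    (i k : ℕ) : g.dist (p.getVert i) (p.getVert (i + k)) ≤ k := by
  induction k with
  | zero => simp
  | succ n ih =>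
    have h2 : g.dist (p.getVert (i + n)) (p.getVert (i + n + 1)) ≤ 1 := by
      rcases Nat.lt_or_ge (i + n) p.length with h | h
      · exact le_of_eq (SimpleGraph.dist_eq_one_iff_adj.mpr (p.adj_getVert_succ h))
      · have e1 : p.getVert (i + n) = v := p.getVert_of_length_le h
        have e2 : p.getVert (i + n + 1) = v := p.getVert_of_length_le (le_trans h (Nat.le_succ _))
        rw [e1, e2, SimpleGraph.dist_self]; omega
    calc g.dist (p.getVert i) (p.getVert (i + (n + 1)))
        ≤ g.dist (p.getVert i) (p.getVert (i + n)) + g.dist (p.getVert (i + n)) (p.getVert (i + n + 1)) := by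
          have := hconn.dist_triangle (u := p.getVert i) (v := p.getVert (i + n)) (w := p.getVert (i + n + 1))
          simpa [← Nat.add_assoc] using this
      _ ≤ n + 1 := by omega

lemma dist_getVert_le (hconn : g.Connected) {u v : V} (p : g.Walk u v)
    {i j : ℕ} (hij : i ≤ j) : g.dist (p.getVert i) (p.getVert j) ≤ j - i := by
  have := dist_getVert_add_le hconn p i (j - i)
  rwa [Nat.add_sub_cancel' hij] at this

end Walks


namespace GBSTree

open SimpleGraph

variable {G : Type} [Group G] (T : GBSTree G)

lemma act_act_inv (g : G) (v : T.V) : T.act g (T.act g⁻¹ v) = v := by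
  rw [← T.act_mul, mul_inv_cancel, T.act_one]

lemma act_inv_act (g : G) (v : T.V) : T.act g⁻¹ (T.act g v) = v := by
  rw [← T.act_mul, inv_mul_cancel, T.act_one]

lemma act_injective (g : G) : Function.Injective (T.act g) := by
  intro a b h
  have := congrArg (T.act g⁻¹) h
  rwa [T.act_inv_act, T.act_inv_act] at this

lemma adj_act_iff (g : G) {v w : T.V} :
    T.graph.Adj (T.act g v) (T.act g w) ↔ T.graph.Adj v w := by
  constructor
  · intro h
    have := T.act_adj g⁻¹ _ _ h
    rwa [T.act_inv_act, T.act_inv_act] at this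
  · exact T.act_adj g v w

/-- The action of `g` as a graph homomorphism. -/
def actHom (g : G) : T.graph →g T.graph :=
  ⟨T.act g, fun h => T.act_adj g _ _ h⟩

lemma actHom_apply (g : G) (v : T.V) : T.actHom g v = T.act g v := rfl

lemma dist_act (g : G) (u v : T.V) :
    T.graph.dist (T.act g u) (T.act g v) = T.graph.dist u v := by
  have key : ∀ (h : G) (a b : T.V), T.graph.dist (T.act h a) (T.act h b) ≤ T.graph.dist a b := by
    intro h a b
    obtain ⟨p, _, hl⟩ := T.isTree.isConnected.exists_path_of_dist a b
    have := SimpleGraph.dist_le (p.map (T.actHom h))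
    rwa [SimpleGraph.Walk.length_map, hl] at this
  refine le_antisymm (key g u v) ?_
  have := key g⁻¹ (T.act g u) (T.act g v)
  rwa [T.act_inv_act, T.act_inv_act] at this

/-- Main geometric lemma: an element acting with no fixed vertex translates some
vertex by exactly `|n| * ℓ` for all powers `n`. -/
lemma exists_displacement (y : G) (hy : ∀ v, T.act y v ≠ v) :
    ∃ (v₀ : T.V) (ℓ : ℕ), 1 ≤ ℓ ∧
      ∀ n : ℤ, T.graph.dist v₀ (T.act (y ^ n) v₀) = n.natAbs * ℓ := by
  classical
  have hconn := T.isTree.isConnected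
  have hA := T.isTree.IsAcyclic
  have hVne : Nonempty T.V := hconn.nonempty
  set D : T.V → ℕ := fun v => T.graph.dist v (T.act y v) with hD
  obtain ⟨v₀, hv₀⟩ : ∃ v₀, D v₀ = sInf (Set.range D) := Nat.sInf_mem (Set.range_nonempty D)
  set ℓ := D v₀ with hℓdef
  have hmin : ∀ w, ℓ ≤ D w := fun w => hv₀ ▸ Nat.sInf_le ⟨w, rfl⟩
  have hℓ : 1 ≤ ℓ := hconn.pos_dist_of_ne (fun h => hy v₀ h.symm)
  obtain ⟨P, hP, hPl⟩ := hconn.exists_path_of_dist v₀ (T.act y v₀)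
  have hPlen : P.length = ℓ := hPl
  -- the no-backtracking condition
  have hkey : T.act y (P.getVert 1) ≠ P.reverse.getVert 1 := by
    have hrev : P.reverse.getVert 1 = P.getVert (ℓ - 1) := by
      rw [SimpleGraph.Walk.getVert_reverse, hPlen]
    rcases eq_or_lt_of_le hℓ with h1 | h2
    · -- ℓ = 1
      have hdE : T.graph.dist v₀ (T.act y v₀) = ℓ := hℓdef.symm
      have hadj : T.graph.Adj v₀ (T.act y v₀) :=
        SimpleGraph.dist_eq_one_iff_adj.mp (by rw [hdE, ← h1])
      have e1 : P.getVert 1 = T.act y v₀ :=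
        P.getVert_of_length_le (by rw [hPlen, ← h1])
      have e2 : P.reverse.getVert 1 = v₀ := by
        rw [hrev, ← h1]
        simpa using P.getVert_zero
      rw [e1, e2]
      intro hcon
      exact T.no_inversions y v₀ (T.act y v₀) hadj ⟨rfl, hcon⟩
    · -- ℓ ≥ 2
      intro hcon
      rw [hrev] at hcon
      have hle : T.graph.dist (P.getVert 1) (P.getVert (ℓ - 1)) ≤ ℓ - 2 := by
        have h := Walks.dist_getVert_le hconn P (i := 1) (j := ℓ - 1) (by omega)
        omega
      have hDw : D (P.getVert 1) = T.graph.dist (P.getVert 1) (P.getVert (ℓ - 1)) := by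
        simp only [hD]
        rw [hcon]
      have := hmin (P.getVert 1)
      omega
  -- inductive construction of concatenated geodesics
  have main : ∀ n : ℕ, ∃ q : T.graph.Walk v₀ (T.act (y ^ (n+1)) v₀), q.IsPath ∧
      q.length = (n+1) * ℓ ∧ q.reverse.getVert 1 = T.act (y ^ n) (P.reverse.getVert 1) := by
    intro n
    induction n with
    | zero =>
      have e : T.act y v₀ = T.act (y ^ 1) v₀ := by rw [pow_one]
      refine ⟨P.copy rfl e, ?_, ?_, ?_⟩
      · simpa using hP
      · simpa using hPlen
      · rw [SimpleGraph.Walk.reverse_copy, Walks.getVert_copy]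
        simp [T.act_one]
    | succ n ih =>
      obtain ⟨q, hq, hql, hqv⟩ := ih
      have e2 : T.act (y ^ (n+1)) (T.act y v₀) = T.act (y ^ (n+2)) v₀ := by
        rw [← T.act_mul, ← pow_succ]
      set R : T.graph.Walk (T.act (y ^ (n+1)) v₀) (T.act (y ^ (n+2)) v₀) :=
        (P.map (T.actHom (y ^ (n+1)))).copy (T.actHom_apply (y ^ (n+1)) v₀) ((T.actHom_apply _ _).trans e2) with hR
      have hRpath : R.IsPath := by
        rw [hR]
        simp only [SimpleGraph.Walk.isPath_copy]
        exact SimpleGraph.Walk.map_isPath_of_injective (T.act_injective _) hP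
      have hRlen : R.length = ℓ := by
        rw [hR]; simp [SimpleGraph.Walk.length_map, hPlen]
      have hRv1 : R.getVert 1 = T.act (y ^ (n+1)) (P.getVert 1) := by
        rw [hR, Walks.getVert_copy, Walks.getVert_map]; rfl
      have hne : q.reverse.getVert 1 ≠ R.getVert 1 := by
        rw [hqv, hRv1]
        intro hcon
        apply hkey
        have := congrArg (T.act (y ^ n)⁻¹) hcon
        rw [T.act_inv_act, ← T.act_mul] at this
        have harg : (y ^ n)⁻¹ * y ^ (n+1) = y := by group
        rw [harg] at this
        exact this.symm
      refine ⟨q.append R, GBSAux.isPath_append hA hq hRpath hne, ?_, ?_⟩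
      · rw [SimpleGraph.Walk.length_append, hql, hRlen]; ring
      · rw [SimpleGraph.Walk.reverse_append, SimpleGraph.Walk.getVert_append]
        have hRrev : R.reverse.getVert 1 = T.act (y ^ (n+1)) (P.reverse.getVert 1) := by
          rw [hR, SimpleGraph.Walk.reverse_copy, Walks.getVert_copy,
            SimpleGraph.Walk.reverse_map, Walks.getVert_map]
          rfl
        rcases eq_or_lt_of_le hℓ with h1 | h2
        · -- ℓ = 1 : the if-condition is false
          have hcond : ¬ (1 < R.reverse.length) := by
            rw [SimpleGraph.Walk.length_reverse, hRlen, ← h1]; omega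
          rw [if_neg hcond]
          have hq0 : q.reverse.getVert (1 - R.reverse.length) = T.act (y ^ (n+1)) v₀ := by
            have : (1 : ℕ) - R.reverse.length = 0 := by
              rw [SimpleGraph.Walk.length_reverse, hRlen]; omega
            rw [this, SimpleGraph.Walk.getVert_zero]
          rw [hq0]
          have : P.reverse.getVert 1 = v₀ := by
            rw [SimpleGraph.Walk.getVert_reverse, hPlen, ← h1]
            simpa using P.getVert_zero
          rw [this]
        · have hcond : 1 < R.reverse.length := by
            rw [SimpleGraph.Walk.length_reverse, hRlen]; omega
          rw [if_pos hcond, hRrev]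
  -- conclude the ℕ version
  have hnat : ∀ n : ℕ, T.graph.dist v₀ (T.act (y ^ n) v₀) = n * ℓ := by
    intro n
    cases n with
    | zero => simp [T.act_one]
    | succ m =>
      obtain ⟨q, hq, hql, _⟩ := main m
      rw [← GBSAux.length_eq_dist_of_isPath T.isTree hq, hql]
  refine ⟨v₀, ℓ, hℓ, ?_⟩
  intro n
  obtain ⟨m, rfl | rfl⟩ := Int.eq_nat_or_neg n
  · rw [zpow_natCast, hnat]; simp
  · have : T.act ((y ^ (m:ℤ))⁻¹) v₀ = T.act ((y:G) ^ (m:ℕ))⁻¹ v₀ := by norm_cast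
    rw [zpow_neg]
    have hdist : T.graph.dist v₀ (T.act ((y ^ (m:ℤ))⁻¹) v₀) =
        T.graph.dist (T.act (y ^ (m:ℤ)) v₀) v₀ := by
      conv_lhs => rw [← T.dist_act (y ^ (m:ℤ))]
      rw [T.act_act_inv]
    rw [hdist, SimpleGraph.dist_comm, zpow_natCast, hnat]
    simp

end GBSTree

set_option linter.unusedSectionVars false
set_option maxHeartbeats 1000000

namespace GBSNat

lemma helper (c : ℕ) : c * (2*c+2) < 2^(2*c+2) := by
  have h2 : c < 2^c := Nat.lt_two_pow_self (n := c)
  have h3 : (c+1)^2 ≤ (2^c)^2 := Nat.pow_le_pow_left h2 2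
  have h4 : 2^(2*c+2) = 4*(2^c)^2 := by
    rw [pow_add, mul_comm 2 c, pow_mul]; ring
  nlinarith

lemma growth (ℓ C a b : ℕ) (hℓ : 1 ≤ ℓ) (ha : 1 ≤ a)
    (h : ∀ k : ℕ, b ^ k * ℓ ≤ a ^ k * ℓ + 2 * (k * C)) : b ≤ a := by
  by_contra hab
  push_neg at hab
  set c := 4*C+1 with hc
  set k := 2*c+2 with hkdef
  have hk := h k
  have hb2 : 2 ≤ b := by omega
  have hk1 : k - 1 + 1 = k := by omega
  have hbk : b ^ k = b ^ (k-1) * b := by rw [← pow_succ, hk1]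
  have key : a ^ k + b ^ (k-1) ≤ b ^ k := by
    have h1 : a ^ k ≤ (b-1)^k := Nat.pow_le_pow_left (by omega) k
    have h3 : (b-1)^k ≤ b^(k-1) * (b-1) := by
      have e : (b-1) ^ k = (b-1)^(k-1) * (b-1) := by rw [← pow_succ, hk1]
      rw [e]
      exact Nat.mul_le_mul_right _ (Nat.pow_le_pow_left (by omega) _)
    have h0 := Nat.mul_succ (b^(k-1)) (b-1)
    rw [Nat.succ_eq_add_one] at h0
    rw [show b-1+1 = b by omega] at h0
    omega
  have hstep : b ^ (k-1) * ℓ ≤ 2 * (k * C) := by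
    have hmul := Nat.mul_le_mul_right ℓ key
    rw [add_mul] at hmul
    omega
  have hpow : 2 ^ (k-1) ≤ b ^ (k-1) := Nat.pow_le_pow_left hb2 _
  have h2k : 2 ^ (k-1) ≤ 2 * (k*C) := by
    have h5 : b ^ (k-1) ≤ b ^ (k-1) * ℓ := Nat.le_mul_of_pos_right _ (by omega)
    omega
  have hck2 : c * k < 2^k := by rw [hkdef]; exact helper c
  have hm : 4 * C * k < c * k :=
    Nat.mul_lt_mul_of_pos_right (by omega) (by omega)
  have hm2 : 4 * C * k = 2 * (2 * (k * C)) := by ring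
  have hck : 2 ^ k = 2 * 2 ^ (k-1) := by
    rw [← pow_succ', hk1]
  omega

end GBSNat

namespace GBSDelta

variable {G : Type} [Group G]

/-- Commensurability of cyclic subgroups. -/
def CommZ (x y : G) : Prop := ∃ i j : ℤ, i ≠ 0 ∧ j ≠ 0 ∧ x ^ i = y ^ j

lemma CommZ.refl (x : G) : CommZ x x := ⟨1, 1, one_ne_zero, one_ne_zero, rfl⟩

lemma CommZ.symm {x y : G} (h : CommZ x y) : CommZ y x := by
  obtain ⟨i, j, hi, hj, hij⟩ := h
  exact ⟨j, i, hj, hi, hij.symm⟩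

lemma CommZ.trans {x y z : G} (h1 : CommZ x y) (h2 : CommZ y z) : CommZ x z := by
  obtain ⟨i, j, hi, hj, hij⟩ := h1
  obtain ⟨u, w, hu, hw, huw⟩ := h2
  refine ⟨i * u, w * j, mul_ne_zero hi hu, mul_ne_zero hw hj, ?_⟩
  calc x ^ (i * u) = (x ^ i) ^ u := zpow_mul x i u
    _ = (y ^ j) ^ u := by rw [hij]
    _ = (y ^ u) ^ j := by rw [← zpow_mul, mul_comm, zpow_mul]
    _ = (z ^ w) ^ j := by rw [huw]
    _ = z ^ (w * j) := (zpow_mul z w j).symm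

lemma conj_zpow (x u : G) (t : ℤ) : (x * u * x⁻¹) ^ t = x * u ^ t * x⁻¹ := by
  have := map_zpow (MulAut.conj x) u t
  simpa [MulAut.conj_apply] using this

variable (a : G)

lemma zpow_ne_one (ha : ¬ IsOfFinOrder a) {i : ℤ} (hi : i ≠ 0) : a ^ i ≠ 1 :=
  fun h => ha (isOfFinOrder_iff_zpow_eq_one.mpr ⟨i, hi, h⟩)

lemma zpow_inj (ha : ¬ IsOfFinOrder a) {i j : ℤ} (h : a ^ i = a ^ j) : i = j :=
  (injective_zpow_iff_not_isOfFinOrder.mpr ha) h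

lemma delta_unique (ha : ¬ IsOfFinOrder a) {x : G} {m n m' n' : ℤ}
    (hm : m ≠ 0) (hm' : m' ≠ 0)
    (hrel : x * a ^ m * x⁻¹ = a ^ n) (hrel' : x * a ^ m' * x⁻¹ = a ^ n') :
    (n : ℚ) / m = (n' : ℚ) / m' := by
  have e1 : x * a ^ (m * m') * x⁻¹ = a ^ (n * m') := by
    calc x * a ^ (m * m') * x⁻¹ = x * (a ^ m) ^ m' * x⁻¹ := by rw [zpow_mul]
      _ = (x * a ^ m * x⁻¹) ^ m' := (conj_zpow x (a ^ m) m').symm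
      _ = (a ^ n) ^ m' := by rw [hrel]
      _ = a ^ (n * m') := (zpow_mul a n m').symm
  have e2 : x * a ^ (m * m') * x⁻¹ = a ^ (n' * m) := by
    rw [mul_comm m m']
    calc x * a ^ (m' * m) * x⁻¹ = x * (a ^ m') ^ m * x⁻¹ := by rw [zpow_mul]
      _ = (x * a ^ m' * x⁻¹) ^ m := (conj_zpow x (a ^ m') m).symm
      _ = (a ^ n') ^ m := by rw [hrel']
      _ = a ^ (n' * m) := (zpow_mul a n' m).symm
  have := zpow_inj a ha (e1.symm.trans e2)
  rw [div_eq_div_iff (by exact_mod_cast hm) (by exact_mod_cast hm')]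
  exact_mod_cast this

variable (hconj : ∀ x : G, ∃ m n : ℤ, m ≠ 0 ∧ n ≠ 0 ∧ x * a ^ m * x⁻¹ = a ^ n)

/-- The modular homomorphism. -/
noncomputable def deltaF (x : G) : ℚ :=
  ((hconj x).choose_spec.choose : ℚ) / ((hconj x).choose : ℚ)

lemma delta_spec (x : G) : ∃ m n : ℤ, m ≠ 0 ∧ n ≠ 0 ∧
    x * a ^ m * x⁻¹ = a ^ n ∧ deltaF a hconj x = (n : ℚ) / m := by
  obtain ⟨hm, hn, hrel⟩ := (hconj x).choose_spec.choose_spec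
  exact ⟨(hconj x).choose, (hconj x).choose_spec.choose, hm, hn, hrel, rfl⟩

lemma delta_eq (ha : ¬ IsOfFinOrder a) {x : G} {m n : ℤ} (hm : m ≠ 0)
    (hrel : x * a ^ m * x⁻¹ = a ^ n) : deltaF a hconj x = (n : ℚ) / m := by
  obtain ⟨m', n', hm', hn', hrel', hval⟩ := delta_spec a hconj x
  rw [hval]
  exact delta_unique a ha hm' hm hrel' hrel

lemma delta_ne_zero (ha : ¬ IsOfFinOrder a) (x : G) : deltaF a hconj x ≠ 0 := by
  obtain ⟨m, n, hm, hn, hrel, hval⟩ := delta_spec a hconj x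
  rw [hval]
  exact div_ne_zero (by exact_mod_cast hn) (by exact_mod_cast hm)

lemma delta_mul (ha : ¬ IsOfFinOrder a) (x₁ x₂ : G) :
    deltaF a hconj (x₁ * x₂) = deltaF a hconj x₁ * deltaF a hconj x₂ := by
  obtain ⟨m₁, n₁, hm₁, hn₁, hrel₁, hval₁⟩ := delta_spec a hconj x₁
  obtain ⟨m₂, n₂, hm₂, hn₂, hrel₂, hval₂⟩ := delta_spec a hconj x₂
  have hrel : (x₁ * x₂) * a ^ (m₂ * m₁) * (x₁ * x₂)⁻¹ = a ^ (n₁ * n₂) := by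
    have e0 : (x₁ * x₂) * a ^ (m₂ * m₁) * (x₁ * x₂)⁻¹
        = x₁ * (x₂ * a ^ (m₂ * m₁) * x₂⁻¹) * x₁⁻¹ := by group
    rw [e0]
    have e1 : x₂ * a ^ (m₂ * m₁) * x₂⁻¹ = a ^ (n₂ * m₁) := by
      calc x₂ * a ^ (m₂ * m₁) * x₂⁻¹ = x₂ * (a ^ m₂) ^ m₁ * x₂⁻¹ := by rw [zpow_mul]
        _ = (x₂ * a ^ m₂ * x₂⁻¹) ^ m₁ := (conj_zpow _ _ _).symm
        _ = (a ^ n₂) ^ m₁ := by rw [hrel₂]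
        _ = a ^ (n₂ * m₁) := (zpow_mul _ _ _).symm
    rw [e1]
    calc x₁ * a ^ (n₂ * m₁) * x₁⁻¹ = x₁ * (a ^ m₁) ^ n₂ * x₁⁻¹ := by
          rw [← zpow_mul, mul_comm m₁ n₂]
      _ = (x₁ * a ^ m₁ * x₁⁻¹) ^ n₂ := (conj_zpow _ _ _).symm
      _ = (a ^ n₁) ^ n₂ := by rw [hrel₁]
      _ = a ^ (n₁ * n₂) := (zpow_mul _ _ _).symm
  rw [delta_eq a hconj ha (mul_ne_zero hm₂ hm₁) hrel, hval₁, hval₂]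
  have hm₁' : (m₁ : ℚ) ≠ 0 := by exact_mod_cast hm₁
  have hm₂' : (m₂ : ℚ) ≠ 0 := by exact_mod_cast hm₂
  field_simp
  push_cast
  ring

lemma delta_one (ha : ¬ IsOfFinOrder a) : deltaF a hconj 1 = 1 := by
  have hrel : (1 : G) * a ^ (1 : ℤ) * (1 : G)⁻¹ = a ^ (1 : ℤ) := by group
  rw [delta_eq a hconj ha one_ne_zero hrel]
  norm_num

lemma delta_inv (ha : ¬ IsOfFinOrder a) (x : G) :
    deltaF a hconj x⁻¹ = (deltaF a hconj x)⁻¹ := by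
  have h := delta_mul a hconj ha x x⁻¹
  rw [mul_inv_cancel, delta_one a hconj ha] at h
  have h2 : deltaF a hconj x * deltaF a hconj x⁻¹ = 1 := h.symm
  exact eq_inv_of_mul_eq_one_right h2

lemma delta_eq_of_comm_rel (ha : ¬ IsOfFinOrder a) {x y : G} {p q : ℤ}
    (hcomm : CommZ y a) (hp : p ≠ 0)
    (hrel : x * y ^ p * x⁻¹ = y ^ q) : deltaF a hconj x = (q : ℚ) / p := by
  obtain ⟨i, j, hi, hj, hij⟩ := hcomm
  have e : x * a ^ (j * p) * x⁻¹ = a ^ (j * q) := by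
    calc x * a ^ (j * p) * x⁻¹ = x * (a ^ j) ^ p * x⁻¹ := by rw [zpow_mul]
      _ = x * (y ^ i) ^ p * x⁻¹ := by rw [hij]
      _ = x * (y ^ p) ^ i * x⁻¹ := by rw [← zpow_mul, mul_comm i p, zpow_mul]
      _ = (x * y ^ p * x⁻¹) ^ i := (conj_zpow _ _ _).symm
      _ = (y ^ q) ^ i := by rw [hrel]
      _ = (y ^ i) ^ q := by rw [← zpow_mul, mul_comm q i, zpow_mul]
      _ = (a ^ j) ^ q := by rw [hij]
      _ = a ^ (j * q) := (zpow_mul _ _ _).symm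
  rw [delta_eq a hconj ha (mul_ne_zero hj hp) e]
  have hj' : (j : ℚ) ≠ 0 := by exact_mod_cast hj
  push_cast
  rw [mul_div_mul_left _ _ hj']

end GBSDelta
namespace GBSTree

open GBSDelta

variable {G : Type} [Group G] (T : GBSTree G)

/-- A generator of the stabilizer of `v`. -/
noncomputable def gen (v : T.V) : G := (T.vertex_stab_infinite_cyclic v).choose

lemma gen_inf (v : T.V) : ¬ IsOfFinOrder (T.gen v) :=
  (T.vertex_stab_infinite_cyclic v).choose_spec.1

lemma gen_fix_iff (v : T.V) (g : G) : T.act g v = v ↔ g ∈ Subgroup.zpowers (T.gen v) :=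
  (T.vertex_stab_infinite_cyclic v).choose_spec.2 g

lemma act_gen_zpow (v : T.V) (k : ℤ) : T.act ((T.gen v) ^ k) v = v :=
  (T.gen_fix_iff v _).mpr (Subgroup.mem_zpowers_iff.mpr ⟨k, rfl⟩)

lemma comm_adj {v w : T.V} (h : T.graph.Adj v w) : CommZ (T.gen v) (T.gen w) := by
  classical
  have hfin : (T.graph.neighborSet v).Finite := T.locallyFinite v
  haveI := hfin.to_subtype
  have hmem : ∀ k : ℤ, T.act ((T.gen v) ^ k) w ∈ T.graph.neighborSet v := by
    intro k
    have h2 := T.act_adj ((T.gen v) ^ k) v w h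
    rwa [T.act_gen_zpow] at h2
  obtain ⟨k, k', hkk', heq⟩ := Finite.exists_ne_map_eq_of_infinite
    (fun k : ℤ => (⟨T.act ((T.gen v) ^ k) w, hmem k⟩ : T.graph.neighborSet v))
  have heq' : T.act ((T.gen v) ^ k) w = T.act ((T.gen v) ^ k') w := congrArg Subtype.val heq
  have hfix : T.act ((T.gen v) ^ (k - k')) w = w := by
    have h3 := congrArg (T.act (((T.gen v) ^ k')⁻¹)) heq'
    rw [← T.act_mul, ← T.act_mul, inv_mul_cancel, T.act_one] at h3
    have e : ((T.gen v) ^ k')⁻¹ * (T.gen v) ^ k = (T.gen v) ^ (k - k') := by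
      rw [← zpow_neg, ← zpow_add]
      congr 1
      ring
    rwa [e] at h3
  obtain ⟨j, hj⟩ := Subgroup.mem_zpowers_iff.mp ((T.gen_fix_iff w _).mp hfix)
  refine ⟨k - k', j, sub_ne_zero.mpr hkk', ?_, hj.symm⟩
  intro hj0
  rw [hj0, zpow_zero] at hj
  exact GBSDelta.zpow_ne_one (T.gen v) (T.gen_inf v) (sub_ne_zero.mpr hkk') hj.symm

lemma comm_gen (v w : T.V) : CommZ (T.gen v) (T.gen w) := by
  obtain ⟨p⟩ := T.isTree.isConnected.preconnected v w
  induction p with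
  | nil => exact CommZ.refl _
  | cons h q ih => exact CommZ.trans (T.comm_adj h) ih

lemma exists_conj (v₀ : T.V) (x : G) :
    ∃ m n : ℤ, m ≠ 0 ∧ n ≠ 0 ∧ x * (T.gen v₀) ^ m * x⁻¹ = (T.gen v₀) ^ n := by
  set a := T.gen v₀ with ha_def
  set c := T.gen (T.act x v₀) with hc_def
  have h1 : T.act (x * a * x⁻¹) (T.act x v₀) = T.act x v₀ := by
    rw [← T.act_mul]
    have e : x * a * x⁻¹ * x = x * a := by group
    rw [e, T.act_mul]
    have : T.act a v₀ = v₀ := by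
      have := T.act_gen_zpow v₀ 1
      rwa [zpow_one] at this
    rw [this]
  obtain ⟨k, hk⟩ := Subgroup.mem_zpowers_iff.mp ((T.gen_fix_iff _ _).mp h1)
  -- hk : c ^ k = x * a * x⁻¹
  have hk0 : k ≠ 0 := by
    intro h0
    rw [h0, zpow_zero] at hk
    have : a = 1 := by
      have := hk.symm
      -- x * a * x⁻¹ = 1
      have h2 : a = x⁻¹ * 1 * x := by
        rw [← this]; group
      rw [h2]; group
    exact T.gen_inf v₀ (by rw [← ha_def, this]; exact IsOfFinOrder.one)
  obtain ⟨i, j, hi, hj, hij⟩ := T.comm_gen (T.act x v₀) v₀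
  -- hij : c ^ i = a ^ j
  refine ⟨i, j * k, hi, mul_ne_zero hj hk0, ?_⟩
  calc x * a ^ i * x⁻¹ = (x * a * x⁻¹) ^ i := (GBSDelta.conj_zpow x a i).symm
    _ = (c ^ k) ^ i := by rw [hk]
    _ = (c ^ i) ^ k := by rw [← zpow_mul, mul_comm, zpow_mul]
    _ = (a ^ j) ^ k := by rw [hij]
    _ = a ^ (j * k) := (zpow_mul _ _ _).symm

lemma natAbs_le_of_nonelliptic (y : G) (hy : ∀ v, T.act y v ≠ v) (x : G) (p q : ℤ)
    (hp : p ≠ 0) (hrel : x * y ^ p * x⁻¹ = y ^ q) : q.natAbs ≤ p.natAbs := by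
  obtain ⟨v₀, ℓ, hℓ, hdist⟩ := T.exists_displacement y hy
  have hconn := T.isTree.isConnected
  have hit : ∀ k : ℕ, x ^ k * y ^ (p ^ k) * (x ^ k)⁻¹ = y ^ (q ^ k) := by
    intro k
    induction k with
    | zero => simp
    | succ k ih =>
      have e1 : x * y ^ (p ^ (k+1)) * x⁻¹ = (y ^ (p ^ k)) ^ q := by
        calc x * y ^ (p ^ (k+1)) * x⁻¹
            = x * (y ^ p) ^ (p ^ k) * x⁻¹ := by rw [← zpow_mul, ← pow_succ']
          _ = (x * y ^ p * x⁻¹) ^ (p ^ k) := (GBSDelta.conj_zpow _ _ _).symm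
          _ = (y ^ q) ^ (p ^ k) := by rw [hrel]
          _ = (y ^ (p ^ k)) ^ q := by rw [← zpow_mul, mul_comm, zpow_mul]
      calc x ^ (k+1) * y ^ (p ^ (k+1)) * (x ^ (k+1))⁻¹
          = x ^ k * (x * y ^ (p ^ (k+1)) * x⁻¹) * (x ^ k)⁻¹ := by
            rw [pow_succ]; group
        _ = x ^ k * (y ^ (p ^ k)) ^ q * (x ^ k)⁻¹ := by rw [e1]
        _ = (x ^ k * y ^ (p ^ k) * (x ^ k)⁻¹) ^ q := (GBSDelta.conj_zpow _ _ _).symm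
        _ = (y ^ (q ^ k)) ^ q := by rw [ih]
        _ = y ^ (q ^ (k+1)) := by rw [← zpow_mul, ← pow_succ]
  have hbnd : ∀ (z : G) (w : T.V), T.graph.dist w (T.act z w) ≤
      T.graph.dist v₀ (T.act z v₀) + 2 * T.graph.dist v₀ w := by
    intro z w
    have h1 := hconn.dist_triangle (u := w) (v := v₀) (w := T.act z w)
    have h2 := hconn.dist_triangle (u := v₀) (v := T.act z v₀) (w := T.act z w)
    have h3 : T.graph.dist (T.act z v₀) (T.act z w) = T.graph.dist v₀ w := T.dist_act z v₀ w
    have h4 : T.graph.dist w v₀ = T.graph.dist v₀ w := SimpleGraph.dist_comm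
    omega
  set C := T.graph.dist v₀ (T.act x⁻¹ v₀) with hC
  have hxk : ∀ k : ℕ, T.graph.dist v₀ (T.act ((x ^ k)⁻¹) v₀) ≤ k * C := by
    intro k
    induction k with
    | zero => simp [pow_zero, T.act_one]
    | succ k ih =>
      have e : (x ^ (k+1))⁻¹ = x⁻¹ * (x ^ k)⁻¹ := by
        rw [pow_succ, mul_inv_rev]
      have h1 := hconn.dist_triangle (u := v₀) (v := T.act x⁻¹ v₀)
        (w := T.act ((x ^ (k+1))⁻¹) v₀)
      have h2 : T.graph.dist (T.act x⁻¹ v₀) (T.act ((x ^ (k+1))⁻¹) v₀) =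
          T.graph.dist v₀ (T.act ((x ^ k)⁻¹) v₀) := by
        rw [e, T.act_mul]
        exact T.dist_act x⁻¹ _ _
      have e2 : (k+1) * C = k * C + C := by ring
      omega
  have hineq : ∀ k : ℕ, q.natAbs ^ k * ℓ ≤ p.natAbs ^ k * ℓ + 2 * (k * C) := by
    intro k
    have h1 : T.graph.dist v₀ (T.act (y ^ (q ^ k)) v₀) = q.natAbs ^ k * ℓ := by
      rw [hdist, Int.natAbs_pow]
    set w := T.act ((x ^ k)⁻¹) v₀ with hw
    have h3 : T.act (y ^ (q ^ k)) v₀ = T.act (x ^ k) (T.act (y ^ (p ^ k)) w) := by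
      rw [← hit k, T.act_mul, T.act_mul]
    have h4 : T.graph.dist v₀ (T.act (y ^ (q ^ k)) v₀) =
        T.graph.dist w (T.act (y ^ (p ^ k)) w) := by
      rw [h3]
      conv_lhs => rw [show v₀ = T.act (x ^ k) w from (by rw [hw, T.act_act_inv])]
      exact T.dist_act (x ^ k) _ _
    have h5 := hbnd (y ^ (p ^ k)) w
    have h6 : T.graph.dist v₀ (T.act (y ^ (p ^ k)) v₀) = p.natAbs ^ k * ℓ := by
      rw [hdist, Int.natAbs_pow]
    have h7 := hxk k
    rw [← hw] at h7
    calc q.natAbs ^ k * ℓ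
        = T.graph.dist w (T.act (y ^ (p ^ k)) w) := h1.symm.trans h4
      _ ≤ T.graph.dist v₀ (T.act (y ^ (p ^ k)) v₀) + 2 * T.graph.dist v₀ w := h5
      _ = p.natAbs ^ k * ℓ + 2 * T.graph.dist v₀ w := by rw [h6]
      _ ≤ p.natAbs ^ k * ℓ + 2 * (k * C) := by omega
  exact GBSNat.growth ℓ C p.natAbs q.natAbs hℓ (Int.natAbs_pos.mpr hp) hineq

lemma abs_eq_of_nonelliptic (y : G) (hy : ∀ v, T.act y v ≠ v) (x : G) (p q : ℤ)
    (hp : p ≠ 0) (hq : q ≠ 0) (hrel : x * y ^ p * x⁻¹ = y ^ q) : |p| = |q| := by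
  have h1 := T.natAbs_le_of_nonelliptic y hy x p q hp hrel
  have hrel' : x⁻¹ * y ^ q * x⁻¹⁻¹ = y ^ p := by
    rw [inv_inv, ← hrel]; group
  have h2 := T.natAbs_le_of_nonelliptic y hy x⁻¹ q p hq hrel'
  rw [Int.abs_eq_natAbs, Int.abs_eq_natAbs]
  exact_mod_cast le_antisymm h2 h1

end GBSTree

/-- The single relation `a² = b²` of the Klein bottle group. -/
def kleinBottleRels : Set (FreeGroup (Fin 2)) :=
  {FreeGroup.of 0 ^ 2 * (FreeGroup.of 1 ^ 2)⁻¹}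

/-- A non-elementary GBS group: a finitely generated group acting on a GBS tree which is
not isomorphic to `ℤ`, `ℤ²`, or the Klein bottle group `⟨a,b | a² = b²⟩`. -/
def IsNonElementaryGBSGroup (G : Type) [Group G] : Prop :=
  Group.FG G ∧ Nonempty (GBSTree G) ∧
    IsEmpty (G ≃* Multiplicative ℤ) ∧
    IsEmpty (G ≃* Multiplicative (ℤ × ℤ)) ∧
    IsEmpty (G ≃* PresentedGroup kleinBottleRels)

/-- A GBS group is unimodular if `x y^p x⁻¹ = y^q` with `y ≠ 1` and `p, q` nonzero
implies `|p| = |q|`. -/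
def Unimodular (G : Type) [Group G] : Prop :=
  ∀ x y : G, ∀ p q : ℤ, p ≠ 0 → q ≠ 0 → y ≠ 1 → x * y ^ p * x⁻¹ = y ^ q → |p| = |q|

/-- Twisted conjugacy: `g'` is `α`-twisted conjugate to `g` if `g' = h g (α h)⁻¹` for
some `h`. The Reidemeister number of `α` is the number of equivalence classes of this
relation, i.e. the cardinality of `Quot (twistedConj α)`. -/
def twistedConj {G : Type} [Group G] (α : G →* G) (g g' : G) : Prop :=
  ∃ h : G, g' = h * g * (α h)⁻¹

/-- **Levitt, Proposition 2.9 (2).** Every injective endomorphism of a non-elementary,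
non-unimodular GBS group has infinite Reidemeister number. -/
theorem reidemeister_infinite_of_injective (G : Type) [Group G]
    (hG : IsNonElementaryGBSGroup G) (hnu : ¬ Unimodular G)
    (α : G →* G) (hα : Function.Injective α) :
    Infinite (Quot (twistedConj α)) := by

  classical
  obtain ⟨-, ⟨T⟩, -, -, -⟩ := hG
  haveI : Nonempty T.V := T.isTree.isConnected.nonempty
  set v₀ := Classical.arbitrary T.V with hv₀
  set a := T.gen v₀ with ha_def
  have ha : ¬ IsOfFinOrder a := T.gen_inf v₀
  have hconj : ∀ x : G, ∃ m n : ℤ, m ≠ 0 ∧ n ≠ 0 ∧ x * a ^ m * x⁻¹ = a ^ n :=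
    T.exists_conj v₀
  set Δ := GBSDelta.deltaF a hconj with hΔ
  have hΔmul : ∀ x₁ x₂ : G, Δ (x₁ * x₂) = Δ x₁ * Δ x₂ :=
    GBSDelta.delta_mul a hconj ha
  have hΔne : ∀ x : G, Δ x ≠ 0 := GBSDelta.delta_ne_zero a hconj ha
  have hΔinv : ∀ x : G, Δ x⁻¹ = (Δ x)⁻¹ := GBSDelta.delta_inv a hconj ha
  have hΔone : Δ 1 = 1 := GBSDelta.delta_one a hconj ha
  have hΔspec : ∀ x : G, ∃ m n : ℤ, m ≠ 0 ∧ n ≠ 0 ∧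
      x * a ^ m * x⁻¹ = a ^ n ∧ Δ x = (n : ℚ) / m :=
    fun x => GBSDelta.delta_spec a hconj x
  -- the trichotomy
  have T1 : ∀ x y : G, ∀ p q : ℤ, p ≠ 0 → q ≠ 0 → y ≠ 1 → x * y ^ p * x⁻¹ = y ^ q →
      Δ x = (q : ℚ) / p ∨ |p| = |q| := by
    intro x y p q hp hq hy1 hrel
    by_cases hell : ∃ v, T.act y v = v
    · left
      obtain ⟨v, hv⟩ := hell
      obtain ⟨k, hk⟩ := Subgroup.mem_zpowers_iff.mp ((T.gen_fix_iff v y).mp hv)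
      have hk0 : k ≠ 0 := by
        rintro rfl
        rw [zpow_zero] at hk
        exact hy1 hk.symm
      have hcomm : GBSDelta.CommZ y a := by
        refine GBSDelta.CommZ.trans (y := T.gen v) ?_ (T.comm_gen v v₀)
        exact ⟨1, k, one_ne_zero, hk0, by rw [zpow_one, hk]⟩
      exact GBSDelta.delta_eq_of_comm_rel a hconj ha hcomm hp hrel
    · right
      push_neg at hell
      exact T.abs_eq_of_nonelliptic y hell x p q hp hq hrel
  have ha1 : a ≠ 1 := by
    intro h
    exact ha (by rw [h]; exact IsOfFinOrder.one)
  -- invariance of Δ under α, first for elements with |Δ x| ≠ 1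
  have inv1 : ∀ x : G, |Δ x| ≠ 1 → Δ (α x) = Δ x := by
    intro x hx
    obtain ⟨m, n, hm, hn, hrel, hval⟩ := hΔspec x
    have hrelα : (α x) * (α a) ^ m * (α x)⁻¹ = (α a) ^ n := by
      have h := congrArg α hrel
      simpa [map_mul, map_zpow, map_inv] using h
    have hαa1 : α a ≠ 1 := fun h => ha1 (hα (h.trans (map_one α).symm))
    rcases T1 (α x) (α a) m n hm hn hαa1 hrelα with h | h
    · rw [h, hval]
    · exfalso
      apply hx
      have hmn : |(n : ℚ)| = |(m : ℚ)| := by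
        rw [← Int.cast_abs, ← Int.cast_abs, h]
      rw [hval, abs_div, hmn, div_self (abs_ne_zero.mpr (by exact_mod_cast hm))]
  -- witness of non-unimodularity
  unfold Unimodular at hnu
  push_neg at hnu
  obtain ⟨x₀, y₀, p₀, q₀, hp₀, hq₀, hy₀, hrel₀, hpq₀⟩ := hnu
  have hΔx₀ : Δ x₀ = (q₀ : ℚ) / p₀ := by
    rcases T1 x₀ y₀ p₀ q₀ hp₀ hq₀ hy₀ hrel₀ with h | h
    · exact h
    · exact absurd h hpq₀
  have habs : |Δ x₀| ≠ 1 := by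
    rw [hΔx₀, abs_div]
    intro h
    apply hpq₀
    have hp₀' : |(p₀ : ℚ)| ≠ 0 := abs_ne_zero.mpr (by exact_mod_cast hp₀)
    have h2 : |(q₀ : ℚ)| = |(p₀ : ℚ)| := by
      field_simp at h
      exact h
    rw [← Int.cast_abs, ← Int.cast_abs] at h2
    exact_mod_cast h2.symm
  -- full invariance
  have hΔα : ∀ x : G, Δ (α x) = Δ x := by
    intro x
    by_cases hx : |Δ x| = 1
    · have hz : |Δ (x * x₀)| ≠ 1 := by
        rw [hΔmul, abs_mul, hx, one_mul]
        exact habs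
      have h1 := inv1 _ hz
      have h2 := inv1 x₀ habs
      rw [map_mul, hΔmul, hΔmul, h2] at h1
      exact mul_right_cancel₀ (hΔne x₀) h1
    · exact inv1 x hx
  -- Δ descends to the twisted conjugacy quotient
  have hsound : ∀ g g' : G, twistedConj α g g' → Δ g = Δ g' := by
    rintro g g' ⟨h, rfl⟩
    rw [hΔmul, hΔmul, hΔinv, hΔα,
      mul_comm (Δ h) (Δ g), mul_assoc, mul_inv_cancel₀ (hΔne h), mul_one]
  set F : Quot (twistedConj α) → ℚ :=
    Quot.lift Δ (fun g g' h => hsound g g' h) with hF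
  -- powers of x₀ give infinitely many classes
  have hpow : ∀ n : ℕ, Δ (x₀ ^ n) = (Δ x₀) ^ n := by
    intro n
    induction n with
    | zero => simpa using hΔone
    | succ n ih => rw [pow_succ, hΔmul, ih, pow_succ]
  have hr0 : 0 < |Δ x₀| := abs_pos.mpr (hΔne x₀)
  have hkey : ∀ m n : ℕ, m < n → |Δ x₀| ^ m ≠ |Δ x₀| ^ n := by
    intro m n hmn
    rcases lt_or_gt_of_ne habs with h1 | h1
    · exact (pow_lt_pow_right_of_lt_one₀ hr0 h1 hmn).ne'
    · exact (pow_lt_pow_right₀ h1 hmn).ne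
  have hinj : Function.Injective (fun n : ℕ => Quot.mk (twistedConj α) (x₀ ^ n)) := by
    intro m n hmn
    have hFmn : Δ (x₀ ^ m) = Δ (x₀ ^ n) := congrArg F hmn
    rw [hpow, hpow] at hFmn
    have habs2 : |Δ x₀| ^ m = |Δ x₀| ^ n := by
      rw [← abs_pow, ← abs_pow, hFmn]
    rcases lt_trichotomy m n with h | h | h
    · exact absurd habs2 (hkey m n h)
    · exact h
    · exact absurd habs2.symm (hkey n m h)
  exact Infinite.of_injective _ hinj
end

section
/- Let J be the group with presentation ⟨a, b, c | a² = b², b² = c²⟩. There is an automorphism α of J fixing a and b and sending c to (ba)c(ba)⁻¹, and an automorphism β of J fixing b and c and sending a to (bc)a(bc)⁻¹. The images of α and β in Out(J) generate a free subgroup of rank 2; in particular Out(J) contains a nonabelian free group. -/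
/-- The subgroup of inner automorphisms of `G`. -/
def innerAutos (G : Type) [Group G] : Subgroup (MulAut G) := (MulAut.conj (G := G)).range

instance innerAutos.normal (G : Type) [Group G] : (innerAutos G).Normal := by
  constructor
  rintro x ⟨g, rfl⟩ φ
  refine ⟨φ g, ?_⟩
  ext y
  simp [MulAut.conj_apply, MulAut.mul_apply, mul_assoc]

/-- The outer automorphism group of `G`. -/
def Out (G : Type) [Group G] : Type := MulAut G ⧸ innerAutos G

instance (G : Type) [Group G] : Group (Out G) :=
  inferInstanceAs (Group (MulAut G ⧸ innerAutos G))

/-- The natural projection from `Aut G` to `Out G`. -/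
def toOut (G : Type) [Group G] : MulAut G →* Out G := QuotientGroup.mk' (innerAutos G)

/-- The relations `a² = b²` and `b² = c²` of the group `J = ⟨a,b,c | a² = b², b² = c²⟩`,
where `a`, `b`, `c` are the generators `0`, `1`, `2`. -/
def JRels : Set (FreeGroup (Fin 3)) :=
  {FreeGroup.of 0 ^ 2 * (FreeGroup.of 1 ^ 2)⁻¹,
   FreeGroup.of 1 ^ 2 * (FreeGroup.of 2 ^ 2)⁻¹}

/-- The group `J = ⟨a,b,c | a² = b², b² = c²⟩`. -/
abbrev JGroup : Type := PresentedGroup JRels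

/-- The generators `a`, `b`, `c` of `J`. -/
def Ja : JGroup := PresentedGroup.of 0
def Jb : JGroup := PresentedGroup.of 1
def Jc : JGroup := PresentedGroup.of 2


open scoped Matrix

namespace OutJ

abbrev Gm := (Matrix (Fin 2) (Fin 2) ℤ)ˣ

def Au : Gm :=
  ⟨!![1,2;0,1], !![1,-2;0,1],
   by rw [Matrix.mul_fin_two]; norm_num [← Matrix.one_fin_two],
   by rw [Matrix.mul_fin_two]; norm_num [← Matrix.one_fin_two]⟩

def Bu : Gm :=
  ⟨!![1,0;2,1], !![1,0;-2,1],
   by rw [Matrix.mul_fin_two]; norm_num [← Matrix.one_fin_two],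
   by rw [Matrix.mul_fin_two]; norm_num [← Matrix.one_fin_two]⟩

def Mhom : FreeGroup (Fin 2) →* Gm :=
  FreeGroup.lift (fun i => if i = 0 then Au else Bu)

/-- the ping-pong space: nonzero integer vectors -/
def PV := {v : Fin 2 → ℤ // v ≠ 0}

instance : MulAction Gm PV where
  smul U v := ⟨U.val *ᵥ v.val, by
    intro h
    apply v.prop
    have := congrArg (fun w => (↑U⁻¹ : Matrix (Fin 2) (Fin 2) ℤ) *ᵥ w) h
    simp only [Matrix.mulVec_mulVec, ← Units.val_mul, inv_mul_cancel, Units.val_one,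
      Matrix.one_mulVec, Matrix.mulVec_zero] at this
    exact this⟩
  one_smul v := Subtype.ext (by simp [HSMul.hSMul, SMul.smul])
  mul_smul U W v := Subtype.ext (by
    show ((U * W : Gm).val) *ᵥ v.val = U.val *ᵥ (W.val *ᵥ v.val)
    rw [Units.val_mul, Matrix.mulVec_mulVec])

theorem smul_val (U : Gm) (v : PV) : (U • v).val = U.val *ᵥ v.val := rfl

end OutJ

namespace OutJ

def Xs : Fin 2 → Set PV := fun i =>
  if i = 0 then {v | v.val 0 * v.val 1 > v.val 1 * v.val 1 ∨ v.val 1 = 0}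
  else {v | v.val 0 * v.val 1 ≥ v.val 0 * v.val 0}

def Ys : Fin 2 → Set PV := fun i =>
  if i = 0 then {v | v.val 1 ≠ 0 ∧ v.val 0 * v.val 1 ≤ -(v.val 1 * v.val 1)}
  else {v | v.val 0 * v.val 1 < -(v.val 0 * v.val 0)}

theorem vec_ne (v : PV) : v.val 0 ≠ 0 ∨ v.val 1 ≠ 0 := by
  by_contra h
  push_neg at h
  exact v.prop (funext fun i => by fin_cases i <;> simp [h.1, h.2])

theorem mem_X0 (v : PV) : v ∈ Xs 0 ↔ (v.val 0 * v.val 1 > v.val 1 * v.val 1 ∨ v.val 1 = 0) :=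
  Iff.rfl

theorem mem_X1 (v : PV) : v ∈ Xs 1 ↔ v.val 0 * v.val 1 ≥ v.val 0 * v.val 0 := by
  simp [Xs]

theorem mem_Y0 (v : PV) :
    v ∈ Ys 0 ↔ (v.val 1 ≠ 0 ∧ v.val 0 * v.val 1 ≤ -(v.val 1 * v.val 1)) := Iff.rfl

theorem mem_Y1 (v : PV) : v ∈ Ys 1 ↔ v.val 0 * v.val 1 < -(v.val 0 * v.val 0) := by
  simp [Ys]

theorem dXX (v : PV) (h0 : v ∈ Xs 0) (h1 : v ∈ Xs 1) : False := by
  rw [mem_X0] at h0; rw [mem_X1] at h1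
  rcases h0 with h | h
  · nlinarith [mul_self_nonneg (v.val 0 - v.val 1)]
  · rcases vec_ne v with hx | hy
    · rw [h, mul_zero] at h1
      nlinarith [mul_self_pos.mpr hx]
    · exact hy h

theorem dX0Y0 (v : PV) (h0 : v ∈ Xs 0) (h1 : v ∈ Ys 0) : False := by
  rw [mem_X0] at h0; rw [mem_Y0] at h1
  rcases h0 with h | h
  · nlinarith [mul_self_pos.mpr h1.1]
  · exact h1.1 h

theorem dX0Y1 (v : PV) (h0 : v ∈ Xs 0) (h1 : v ∈ Ys 1) : False := by
  rw [mem_X0] at h0; rw [mem_Y1] at h1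
  rcases h0 with h | h
  · nlinarith [mul_self_nonneg (v.val 0), mul_self_nonneg (v.val 1)]
  · rw [h, mul_zero] at h1
    nlinarith [mul_self_nonneg (v.val 0)]

theorem dX1Y0 (v : PV) (h0 : v ∈ Xs 1) (h1 : v ∈ Ys 0) : False := by
  rw [mem_X1] at h0; rw [mem_Y0] at h1
  nlinarith [mul_self_nonneg (v.val 0), mul_self_pos.mpr h1.1]

theorem dX1Y1 (v : PV) (h0 : v ∈ Xs 1) (h1 : v ∈ Ys 1) : False := by
  rw [mem_X1] at h0; rw [mem_Y1] at h1
  nlinarith [mul_self_nonneg (v.val 0)]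

theorem dYY (v : PV) (h0 : v ∈ Ys 0) (h1 : v ∈ Ys 1) : False := by
  rw [mem_Y0] at h0; rw [mem_Y1] at h1
  nlinarith [mul_self_nonneg (v.val 0 + v.val 1)]

theorem Au_smul (v : PV) :
    ((Au • v : PV)).val 0 = v.val 0 + 2 * v.val 1 ∧ ((Au • v : PV)).val 1 = v.val 1 := by
  constructor <;>
  simp [smul_val, Au, Matrix.mulVec, dotProduct, Fin.sum_univ_two] <;> ring

theorem AuInv_smul (v : PV) :
    ((Au⁻¹ • v : PV)).val 0 = v.val 0 - 2 * v.val 1 ∧ ((Au⁻¹ • v : PV)).val 1 = v.val 1 := by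
  constructor <;>
  simp [smul_val, Au, Matrix.mulVec, dotProduct, Fin.sum_univ_two, Units.inv_mk] <;> ring

theorem Bu_smul (v : PV) :
    ((Bu • v : PV)).val 0 = v.val 0 ∧ ((Bu • v : PV)).val 1 = 2 * v.val 0 + v.val 1 := by
  constructor <;>
  simp [smul_val, Bu, Matrix.mulVec, dotProduct, Fin.sum_univ_two] <;> ring

theorem BuInv_smul (v : PV) :
    ((Bu⁻¹ • v : PV)).val 0 = v.val 0 ∧ ((Bu⁻¹ • v : PV)).val 1 = v.val 1 - 2 * v.val 0 := by
  constructor <;>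
  simp [smul_val, Bu, Matrix.mulVec, dotProduct, Fin.sum_univ_two, Units.inv_mk] <;> ring

theorem Minj : Function.Injective Mhom := by
  apply FreeGroup.injective_lift_of_ping_pong (fun i => if i = 0 then Au else Bu) Xs Ys
  · -- nonempty
    intro i
    fin_cases i
    · exact ⟨⟨![1,0], by intro h; simpa using congrFun h 0⟩, by simp [Xs]; exact Or.inr rfl⟩
    · exact ⟨⟨![0,1], by intro h; simpa using congrFun h 1⟩, by
        simp [Xs]; show (0:ℤ) * 0 ≤ 0 * 1; decide⟩
  · -- X pairwise disjoint
    intro i j hij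
    fin_cases i <;> fin_cases j <;> simp_all [Function.onFun] <;>
      rw [Set.disjoint_left] <;> intro v hv hv'
    · exact dXX v hv hv'
    · exact dXX v hv' hv
  · -- Y pairwise disjoint
    intro i j hij
    fin_cases i <;> fin_cases j <;> simp_all [Function.onFun] <;>
      rw [Set.disjoint_left] <;> intro v hv hv'
    · exact dYY v hv hv'
    · exact dYY v hv' hv
  · -- X vs Y disjoint
    intro i j
    rw [Set.disjoint_left]; intro v hv hv'
    fin_cases i <;> fin_cases j
    · exact dX0Y0 v hv hv'
    · exact dX0Y1 v hv hv'
    · exact dX1Y0 v hv hv'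
    · exact dX1Y1 v hv hv'
  · -- hX
    intro i
    fin_cases i
    · simp only [Fin.mk_zero, if_pos rfl]
      rintro w ⟨v, hv, rfl⟩
      show Au • v ∈ Xs 0
      rw [mem_X0]
      obtain ⟨e0, e1⟩ := Au_smul v
      rw [e0, e1]
      simp only [Fin.mk_zero, Set.mem_compl_iff, mem_Y0, not_and, not_le, not_not] at hv
      rcases eq_or_ne (v.val 1) 0 with h | h
      · exact Or.inr h
      · exact Or.inl (by nlinarith [hv h])
    · simp only [Fin.mk_one, if_neg (by decide : (1:Fin 2) ≠ 0)]
      rintro w ⟨v, hv, rfl⟩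
      show Bu • v ∈ Xs 1
      rw [mem_X1]
      obtain ⟨e0, e1⟩ := Bu_smul v
      rw [e0, e1]
      simp only [Fin.mk_one, Set.mem_compl_iff, mem_Y1, not_lt] at hv
      nlinarith
  · -- hY
    intro i
    fin_cases i
    · simp only [Fin.mk_zero, Pi.inv_apply, if_pos rfl]
      rintro w ⟨v, hv, rfl⟩
      show Au⁻¹ • v ∈ Ys 0
      rw [mem_Y0]
      obtain ⟨e0, e1⟩ := AuInv_smul v
      rw [e0, e1]
      simp only [Fin.mk_zero, Set.mem_compl_iff, mem_X0, not_or] at hv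
      push_neg at hv
      exact ⟨hv.2, by nlinarith [hv.1]⟩
    · simp only [Fin.mk_one, Pi.inv_apply, if_neg (by decide : (1:Fin 2) ≠ 0)]
      rintro w ⟨v, hv, rfl⟩
      show Bu⁻¹ • v ∈ Ys 1
      rw [mem_Y1]
      obtain ⟨e0, e1⟩ := BuInv_smul v
      rw [e0, e1]
      simp only [Fin.mk_one, Set.mem_compl_iff, mem_X1, not_le] at hv
      nlinarith


abbrev Gm4 := (Matrix (Fin 2) (Fin 2) (ZMod 4))ˣ

/-- reduction mod 4 -/
def red : Gm →* Gm4 :=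
  Units.map ((Int.castRingHom (ZMod 4)).mapMatrix.toMonoidHom)

theorem h4 : (4 : ZMod 4) = 0 := by decide

theorem key_mul {a b a' b' : ZMod 4} :
    (!![1, 2*a; 2*b, 1] : Matrix (Fin 2) (Fin 2) (ZMod 4)) * !![1, 2*a'; 2*b', 1]
      = !![1, 2*(a+a'); 2*(b+b'), 1] := by
  rw [Matrix.mul_fin_two]
  ext i j
  fin_cases i <;> fin_cases j <;> simp <;>
    first
    | linear_combination a * b' * h4
    | linear_combination b * a' * h4
    | ring

theorem two_smul_cancel {a : ZMod 4} : 2 * (a + a) = 0 := by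
  linear_combination a * h4

def S4 : Subgroup Gm4 where
  carrier := {U | ∃ a b : ZMod 4, U.val = !![1, 2*a; 2*b, 1]}
  one_mem' := ⟨0, 0, by rw [Units.val_one, Matrix.one_fin_two]; norm_num⟩
  mul_mem' := by
    rintro U W ⟨a, b, hU⟩ ⟨a', b', hW⟩
    exact ⟨a + a', b + b', by rw [Units.val_mul, hU, hW, key_mul]⟩
  inv_mem' := by
    rintro U ⟨a, b, hU⟩
    have hsq : U * U = 1 := Units.ext (by
      rw [Units.val_mul, hU, key_mul, Units.val_one, Matrix.one_fin_two,
        two_smul_cancel, two_smul_cancel])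
    rw [inv_eq_of_mul_eq_one_right hsq]
    exact ⟨a, b, hU⟩

theorem neg_one_not_mem_S4 : (-1 : Gm4) ∉ S4 := by
  rintro ⟨a, b, h⟩
  have := congrFun (congrFun h 0) 0
  simp [Matrix.one_fin_two] at this
  exact (by decide : ¬((-1 : ZMod 4) = 1)) this


/-- The `GL₂(ℤ)` action on `ℤ²` as multiplicative automorphisms. -/
def act (U : Gm) : MulAut (Multiplicative (Fin 2 → ℤ)) where
  toFun v := Multiplicative.ofAdd (U.val *ᵥ v.toAdd)
  invFun v := Multiplicative.ofAdd ((↑U⁻¹ : Matrix (Fin 2) (Fin 2) ℤ) *ᵥ v.toAdd)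
  left_inv v := by
    simp only [toAdd_ofAdd, Matrix.mulVec_mulVec, ← Units.val_mul, inv_mul_cancel, Units.val_one,
      Matrix.one_mulVec, ofAdd_toAdd]
  right_inv v := by
    simp only [toAdd_ofAdd, Matrix.mulVec_mulVec, ← Units.val_mul, mul_inv_cancel, Units.val_one,
      Matrix.one_mulVec, ofAdd_toAdd]
  map_mul' v w := by
    simp only [toAdd_mul, Matrix.mulVec_add, ofAdd_add]

def phi : Gm →* MulAut (Multiplicative (Fin 2 → ℤ)) where
  toFun := act
  map_one' := by
    ext v
    simp [act]
  map_mul' U W := by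
    ext v
    simp [act, Matrix.mulVec_mulVec]
    rename_i i
    fin_cases i <;> simp [Matrix.mul_apply, Fin.sum_univ_two] <;> ring

abbrev V := Multiplicative (Fin 2 → ℤ) ⋊[phi] Gm

def gA : V := ⟨Multiplicative.ofAdd ![1,0], -1⟩
def gB : V := ⟨1, -1⟩
def gC : V := ⟨Multiplicative.ofAdd ![0,-1], -1⟩

theorem phi_neg_one (v : Fin 2 → ℤ) :
    phi (-1) (Multiplicative.ofAdd v) = Multiplicative.ofAdd (-v) := by
  simp [phi, act, Matrix.neg_mulVec]

theorem gen_sq (v : Fin 2 → ℤ) : (⟨Multiplicative.ofAdd v, -1⟩ : V) ^ 2 = 1 := by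
  rw [pow_two]
  refine SemidirectProduct.ext ?_ ?_
  · rw [SemidirectProduct.mul_left, phi_neg_one]
    show Multiplicative.ofAdd v * Multiplicative.ofAdd (-v) = Multiplicative.ofAdd 0
    rw [← ofAdd_add]
    simp
  · rw [SemidirectProduct.mul_right]
    show ((-1 : Gm) * -1) = 1
    simp


theorem mk_rel {r : FreeGroup (Fin 3)} (hr : r ∈ JRels) : PresentedGroup.mk JRels r = 1 :=
  (QuotientGroup.eq_one_iff _).mpr (Subgroup.subset_normalClosure hr)

theorem sq_ab : Ja ^ 2 = Jb ^ 2 := by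
  have h := mk_rel (Set.mem_insert _ _)
  rw [map_mul, map_inv, map_pow, map_pow, mul_inv_eq_one] at h
  exact h

theorem sq_bc : Jb ^ 2 = Jc ^ 2 := by
  have h := mk_rel (Set.mem_insert_of_mem _ rfl)
  rw [map_mul, map_inv, map_pow, map_pow, mul_inv_eq_one] at h
  exact h

theorem comm_a : Commute Ja (Jb ^ 2) := sq_ab ▸ (Commute.refl Ja).pow_right 2
theorem comm_b : Commute Jb (Jb ^ 2) := (Commute.refl Jb).pow_right 2
theorem comm_c : Commute Jc (Jb ^ 2) := sq_bc ▸ (Commute.refl Jc).pow_right 2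

theorem conj_sq (g x : JGroup) : (g * x * g⁻¹) ^ 2 = g * x ^ 2 * g⁻¹ := by
  rw [pow_two, pow_two]
  group

theorem conj_comm {G : Type} [Group G] {u z : G} (hc : Commute u z) : u * z * u⁻¹ = z := by
  rw [hc.eq]
  simp [mul_assoc]

theorem lift_rels {G : Type} [Group G] (f : Fin 3 → G) (h1 : f 0 ^ 2 = f 1 ^ 2)
    (h2 : f 1 ^ 2 = f 2 ^ 2) : ∀ r ∈ JRels, FreeGroup.lift f r = 1 := by
  intro r hr
  simp only [JRels, Set.mem_insert_iff, Set.mem_singleton_iff] at hr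
  rcases hr with rfl | rfl <;>
    rw [map_mul, map_inv, map_pow, map_pow, FreeGroup.lift_apply_of, FreeGroup.lift_apply_of,
      mul_inv_eq_one]
  · exact h1
  · exact h2

theorem conj_gen_sq_a : ((Jb * Jc) * Ja * (Jb * Jc)⁻¹) ^ 2 = Jb ^ 2 := by
  rw [conj_sq, sq_ab, conj_comm (comm_b.mul_left comm_c)]

theorem conj_gen_sq_c : ((Jb * Ja) * Jc * (Jb * Ja)⁻¹) ^ 2 = Jb ^ 2 := by
  rw [conj_sq, ← sq_bc, conj_comm (comm_b.mul_left comm_a)]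

theorem conj_gen_sq_c' : ((Jb * Ja)⁻¹ * Jc * (Jb * Ja)) ^ 2 = Jb ^ 2 := by
  have := conj_sq (Jb * Ja)⁻¹ Jc
  rw [inv_inv] at this
  rw [this, ← sq_bc]
  have h := conj_comm (comm_b.mul_left comm_a).inv_left
  rwa [inv_inv] at h

theorem conj_gen_sq_a' : ((Jb * Jc)⁻¹ * Ja * (Jb * Jc)) ^ 2 = Jb ^ 2 := by
  have := conj_sq (Jb * Jc)⁻¹ Ja
  rw [inv_inv] at this
  rw [this, sq_ab]
  have h := conj_comm (comm_b.mul_left comm_c).inv_left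
  rwa [inv_inv] at h

def alphaHom : JGroup →* JGroup :=
  PresentedGroup.toGroup (f := ![Ja, Jb, (Jb * Ja) * Jc * (Jb * Ja)⁻¹])
    (lift_rels _ (by simpa using sq_ab) (by simpa using conj_gen_sq_c.symm))

def alphaInv : JGroup →* JGroup :=
  PresentedGroup.toGroup (f := ![Ja, Jb, (Jb * Ja)⁻¹ * Jc * (Jb * Ja)])
    (lift_rels _ (by simpa using sq_ab) (by simpa using conj_gen_sq_c'.symm))

def betaHom : JGroup →* JGroup :=
  PresentedGroup.toGroup (f := ![(Jb * Jc) * Ja * (Jb * Jc)⁻¹, Jb, Jc])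
    (lift_rels _ (by simpa using conj_gen_sq_a) (by simpa using sq_bc))

def betaInv : JGroup →* JGroup :=
  PresentedGroup.toGroup (f := ![(Jb * Jc)⁻¹ * Ja * (Jb * Jc), Jb, Jc])
    (lift_rels _ (by simpa using conj_gen_sq_a') (by simpa using sq_bc))

theorem alpha_a : alphaHom Ja = Ja := by simp [alphaHom, Ja]
theorem alpha_b : alphaHom Jb = Jb := by simp [alphaHom, Jb]
theorem alpha_c : alphaHom Jc = (Jb * Ja) * Jc * (Jb * Ja)⁻¹ := by simp [alphaHom, Jc]
theorem alphaInv_a : alphaInv Ja = Ja := by simp [alphaInv, Ja]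
theorem alphaInv_b : alphaInv Jb = Jb := by simp [alphaInv, Jb]
theorem alphaInv_c : alphaInv Jc = (Jb * Ja)⁻¹ * Jc * (Jb * Ja) := by simp [alphaInv, Jc]
theorem beta_a : betaHom Ja = (Jb * Jc) * Ja * (Jb * Jc)⁻¹ := by simp [betaHom, Ja]
theorem beta_b : betaHom Jb = Jb := by simp [betaHom, Jb]
theorem beta_c : betaHom Jc = Jc := by simp [betaHom, Jc]
theorem betaInv_a : betaInv Ja = (Jb * Jc)⁻¹ * Ja * (Jb * Jc) := by simp [betaInv, Ja]
theorem betaInv_b : betaInv Jb = Jb := by simp [betaInv, Jb]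
theorem betaInv_c : betaInv Jc = Jc := by simp [betaInv, Jc]

def alpha : MulAut JGroup :=
  MonoidHom.toMulEquiv alphaHom alphaInv
    (by
      ext x
      fin_cases x
      · show alphaInv (alphaHom Ja) = Ja
        rw [alpha_a, alphaInv_a]
      · show alphaInv (alphaHom Jb) = Jb
        rw [alpha_b, alphaInv_b]
      · show alphaInv (alphaHom Jc) = Jc
        rw [alpha_c, map_mul, map_mul, map_inv, map_mul, alphaInv_a, alphaInv_b, alphaInv_c]
        group)
    (by
      ext x
      fin_cases x
      · show alphaHom (alphaInv Ja) = Ja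
        rw [alphaInv_a, alpha_a]
      · show alphaHom (alphaInv Jb) = Jb
        rw [alphaInv_b, alpha_b]
      · show alphaHom (alphaInv Jc) = Jc
        rw [alphaInv_c, map_mul, map_mul, map_inv, map_mul, alpha_a, alpha_b, alpha_c]
        group)

def beta : MulAut JGroup :=
  MonoidHom.toMulEquiv betaHom betaInv
    (by
      ext x
      fin_cases x
      · show betaInv (betaHom Ja) = Ja
        rw [beta_a, map_mul, map_mul, map_inv, map_mul, betaInv_a, betaInv_b, betaInv_c]
        group
      · show betaInv (betaHom Jb) = Jb
        rw [beta_b, betaInv_b]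
      · show betaInv (betaHom Jc) = Jc
        rw [beta_c, betaInv_c])
    (by
      ext x
      fin_cases x
      · show betaHom (betaInv Ja) = Ja
        rw [betaInv_a, map_mul, map_mul, map_inv, map_mul, beta_a, beta_b, beta_c]
        group
      · show betaHom (betaInv Jb) = Jb
        rw [betaInv_b, beta_b]
      · show betaHom (betaInv Jc) = Jc
        rw [betaInv_c, beta_c])

theorem alpha_apply (x : JGroup) : alpha x = alphaHom x := rfl
theorem beta_apply (x : JGroup) : beta x = betaHom x := rfl


def hV : JGroup →* V :=
  PresentedGroup.toGroup (f := ![gA, gB, gC])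
    (lift_rels _ (by exact (gen_sq ![1,0]).trans (gen_sq (0 : Fin 2 → ℤ)).symm)
      (by exact (gen_sq (0 : Fin 2 → ℤ)).trans (gen_sq ![0,-1]).symm))

theorem hV_a : hV Ja = gA := by simp [hV, Ja]
theorem hV_b : hV Jb = gB := by simp [hV, Jb]
theorem hV_c : hV Jc = gC := by simp [hV, Jc]


def autLift : FreeGroup (Fin 2) →* MulAut JGroup :=
  FreeGroup.lift (fun i => if i = 0 then alpha else beta)

theorem cV_inv (U : Gm) : (⟨1, U⟩ : V)⁻¹ = ⟨1, U⁻¹⟩ := by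
  refine SemidirectProduct.ext ?_ ?_
  · rw [SemidirectProduct.inv_left]
    simp
  · rw [SemidirectProduct.inv_right]

theorem cV_mul (U W : Gm) : (⟨1, U⟩ : V) * ⟨1, W⟩ = ⟨1, U * W⟩ := by
  refine SemidirectProduct.ext ?_ ?_
  · rw [SemidirectProduct.mul_left]
    simp
  · rw [SemidirectProduct.mul_right]

theorem phi_ofAdd (U : Gm) (v : Fin 2 → ℤ) :
    phi U (Multiplicative.ofAdd v) = Multiplicative.ofAdd (U.val *ᵥ v) := rfl

theorem mk_mul (u v : Fin 2 → ℤ) (s t : Gm) :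
    (⟨Multiplicative.ofAdd u, s⟩ : V) * ⟨Multiplicative.ofAdd v, t⟩
      = ⟨Multiplicative.ofAdd (u + s.val *ᵥ v), s * t⟩ := by
  refine SemidirectProduct.ext ?_ ?_
  · rw [SemidirectProduct.mul_left, phi_ofAdd, ← ofAdd_add]
  · rw [SemidirectProduct.mul_right]

theorem mk_inv (u : Fin 2 → ℤ) (s : Gm) :
    (⟨Multiplicative.ofAdd u, s⟩ : V)⁻¹
      = ⟨Multiplicative.ofAdd (-((↑s⁻¹ : Matrix (Fin 2) (Fin 2) ℤ) *ᵥ u)), s⁻¹⟩ := by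
  refine SemidirectProduct.ext ?_ ?_
  · rw [SemidirectProduct.inv_left]
    show phi s⁻¹ (Multiplicative.ofAdd u)⁻¹ = _
    rw [← ofAdd_neg, phi_ofAdd, Matrix.mulVec_neg]
  · rw [SemidirectProduct.inv_right]

theorem conjV (U : Gm) (n : Multiplicative (Fin 2 → ℤ)) (g : Gm) :
    (⟨1, U⟩ : V) * ⟨n, g⟩ * (⟨1, U⟩ : V)⁻¹ = ⟨phi U n, U * g * U⁻¹⟩ := by
  rw [cV_inv]
  refine SemidirectProduct.ext ?_ ?_
  · rw [SemidirectProduct.mul_left, SemidirectProduct.mul_left]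
    simp
  · rw [SemidirectProduct.mul_right, SemidirectProduct.mul_right]

theorem conj_neg_one (U : Gm) : U * (-1) * U⁻¹ = -1 := by
  simp

theorem gB_eq : gB = ⟨Multiplicative.ofAdd ![0,0], -1⟩ := by
  have : (![0,0] : Fin 2 → ℤ) = 0 := by
    funext i
    fin_cases i <;> simp
  rw [gB]
  congr 1
  rw [this]
  rfl

theorem inter_alpha (x : JGroup) :
    hV (alpha x) = ⟨1, Au⟩ * hV x * (⟨1, Au⟩ : V)⁻¹ := by
  have : hV.comp alphaHom
      = ((MulAut.conj (⟨1, Au⟩ : V)).toMonoidHom).comp hV := by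
    apply PresentedGroup.ext
    intro j
    fin_cases j
    · show hV (alphaHom Ja) = MulAut.conj _ (hV Ja)
      rw [alpha_a, MulAut.conj_apply, hV_a, gA, conjV, phi_ofAdd, conj_neg_one]
      congr 2
      funext i
      fin_cases i <;> simp [Au, Matrix.mulVec, dotProduct, Fin.sum_univ_two]
    · show hV (alphaHom Jb) = MulAut.conj _ (hV Jb)
      rw [alpha_b, MulAut.conj_apply, hV_b, gB, conjV, conj_neg_one, map_one]
    · show hV (alphaHom Jc) = MulAut.conj _ (hV Jc)
      rw [alpha_c, MulAut.conj_apply, hV_c, map_mul, map_mul, map_inv, map_mul,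
        hV_a, hV_b, hV_c, gA, gB_eq, gC, conjV, phi_ofAdd, conj_neg_one]
      rw [mk_mul, mk_mul, mk_inv, mk_mul]
      refine SemidirectProduct.ext ?_ ?_
      · show Multiplicative.ofAdd _ = Multiplicative.ofAdd _
        congr 1
        funext i
        fin_cases i <;>
          simp [Au, Matrix.mulVec, dotProduct, Fin.sum_univ_two, Units.val_neg,
            Matrix.neg_mulVec]
      · show _ = (-1 : Gm)
        simp
  exact DFunLike.congr_fun this x

theorem inter_beta (x : JGroup) :
    hV (beta x) = ⟨1, Bu⟩ * hV x * (⟨1, Bu⟩ : V)⁻¹ := by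
  have : hV.comp betaHom
      = ((MulAut.conj (⟨1, Bu⟩ : V)).toMonoidHom).comp hV := by
    apply PresentedGroup.ext
    intro j
    fin_cases j
    · show hV (betaHom Ja) = MulAut.conj _ (hV Ja)
      rw [beta_a, MulAut.conj_apply, map_mul, map_mul, map_inv, map_mul,
        hV_a, hV_b, hV_c, gA, gB_eq, gC, conjV, phi_ofAdd, conj_neg_one]
      rw [mk_mul, mk_mul, mk_inv, mk_mul]
      refine SemidirectProduct.ext ?_ ?_
      · show Multiplicative.ofAdd _ = Multiplicative.ofAdd _
        congr 1
        funext i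
        fin_cases i <;>
          simp [Bu, Matrix.mulVec, dotProduct, Fin.sum_univ_two, Units.val_neg,
            Matrix.neg_mulVec]
      · show _ = (-1 : Gm)
        simp
    · show hV (betaHom Jb) = MulAut.conj _ (hV Jb)
      rw [beta_b, MulAut.conj_apply, hV_b, gB, conjV, conj_neg_one, map_one]
    · show hV (betaHom Jc) = MulAut.conj _ (hV Jc)
      rw [beta_c, MulAut.conj_apply, hV_c, gC, conjV, phi_ofAdd, conj_neg_one]
      congr 2
      funext i
      fin_cases i <;> simp [Bu, Matrix.mulVec, dotProduct, Fin.sum_univ_two]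
  exact DFunLike.congr_fun this x

theorem inter (w : FreeGroup (Fin 2)) :
    ∀ x : JGroup, hV (autLift w x) = ⟨1, Mhom w⟩ * hV x * (⟨1, Mhom w⟩ : V)⁻¹ := by
  refine FreeGroup.induction_on w ?_ ?_ ?_ ?_
  · intro x
    simp only [map_one]
    show hV x = (1 : V) * hV x * (1 : V)⁻¹
    simp
  · intro i x
    show hV (autLift (FreeGroup.of i) x)
        = ⟨1, Mhom (FreeGroup.of i)⟩ * hV x * (⟨1, Mhom (FreeGroup.of i)⟩ : V)⁻¹
    have h1 : autLift (FreeGroup.of i) = if i = 0 then alpha else beta := by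
      simp [autLift]
    have h2 : Mhom (FreeGroup.of i) = if i = 0 then Au else Bu := by
      simp [Mhom]
    rw [h1, h2]
    by_cases hi : i = 0
    · rw [if_pos hi, if_pos hi]
      exact inter_alpha x
    · rw [if_neg hi, if_neg hi]
      exact inter_beta x
  · intro i ih x
    show hV (autLift (FreeGroup.of i)⁻¹ x)
        = ⟨1, Mhom (FreeGroup.of i)⁻¹⟩ * hV x * (⟨1, Mhom (FreeGroup.of i)⁻¹⟩ : V)⁻¹
    rw [map_inv, map_inv, ← cV_inv]
    set aw := autLift (FreeGroup.of i) with haw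
    set U := Mhom (FreeGroup.of i) with hU
    have h3 := ih (aw⁻¹ x)
    have h4 : aw (aw⁻¹ x) = x := by
      rw [← MulAut.mul_apply]
      simp
    rw [h4] at h3
    rw [h3]
    group
  · intro y z ihy ihz x
    rw [map_mul, map_mul, MulAut.mul_apply, ihy, ihz]
    rw [← cV_mul, mul_inv_rev]
    group



theorem red_S4 (w : FreeGroup (Fin 2)) : red (Mhom w) ∈ S4 := by
  refine FreeGroup.induction_on w ?_ ?_ ?_ ?_
  · rw [map_one, map_one]
    exact S4.one_mem
  · intro i
    have h2 : Mhom (FreeGroup.of i) = if i = 0 then Au else Bu := by simp [Mhom]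
    rw [h2]
    by_cases hi : i = 0
    · rw [if_pos hi]
      refine ⟨1, 0, ?_⟩
      show (Int.castRingHom (ZMod 4)).mapMatrix (Au.val) = _
      rw [RingHom.mapMatrix_apply]
      funext a b
      fin_cases a <;> fin_cases b <;> simp [Au, Matrix.map_apply] <;> decide
    · rw [if_neg hi]
      refine ⟨0, 1, ?_⟩
      show (Int.castRingHom (ZMod 4)).mapMatrix (Bu.val) = _
      rw [RingHom.mapMatrix_apply]
      funext a b
      fin_cases a <;> fin_cases b <;> simp [Bu, Matrix.map_apply] <;> decide
  · intro i ih
    rw [map_inv, map_inv]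
    exact S4.inv_mem ih
  · intro y z ihy ihz
    rw [map_mul, map_mul]
    exact S4.mul_mem ihy ihz

theorem red_neg_one : red (-1 : Gm) = (-1 : Gm4) := by
  apply Units.ext
  show (Int.castRingHom (ZMod 4)).mapMatrix ((-1 : Gm).val) = _
  rw [Units.val_neg, Units.val_one, map_neg, map_one]
  rfl

theorem Mhom_ne_neg_one (w : FreeGroup (Fin 2)) : Mhom w ≠ -1 := by
  intro hw
  have h1 := red_S4 w
  rw [hw, red_neg_one] at h1
  exact neg_one_not_mem_S4 h1

theorem rightHom_hV_mem (x : JGroup) :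
    SemidirectProduct.rightHom (hV x) ∈ Subgroup.zpowers (-1 : Gm) := by
  refine PresentedGroup.generated_by JRels
    ((Subgroup.zpowers (-1 : Gm)).comap (SemidirectProduct.rightHom.comp hV)) ?_ x
  intro j
  rw [Subgroup.mem_comap]
  fin_cases j
  · show SemidirectProduct.rightHom (hV Ja) ∈ _
    rw [hV_a]
    exact Subgroup.mem_zpowers _
  · show SemidirectProduct.rightHom (hV Jb) ∈ _
    rw [hV_b]
    exact Subgroup.mem_zpowers _
  · show SemidirectProduct.rightHom (hV Jc) ∈ _
    rw [hV_c]
    exact Subgroup.mem_zpowers _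

theorem key : Function.Injective
    (FreeGroup.lift (fun i : Fin 2 => if i = 0 then toOut JGroup alpha else toOut JGroup beta) :
      FreeGroup (Fin 2) →* Out JGroup) := by
  rw [injective_iff_map_eq_one]
  intro w hw
  have hfact : (FreeGroup.lift
        (fun i : Fin 2 => if i = 0 then toOut JGroup alpha else toOut JGroup beta) :
      FreeGroup (Fin 2) →* Out JGroup) = (toOut JGroup).comp autLift := by
    apply FreeGroup.ext_hom
    intro i
    by_cases hi : i = 0 <;> simp [autLift, hi]
  rw [hfact] at hw
  have hmem : autLift w ∈ innerAutos JGroup := (QuotientGroup.eq_one_iff (autLift w)).mp hw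
  obtain ⟨g, hg⟩ := hmem
  have hconj : ∀ x : JGroup, autLift w x = g * x * g⁻¹ := by
    intro x
    rw [← hg]
    rfl
  set c : V := ⟨1, Mhom w⟩ with hc
  have hmain : ∀ x : JGroup, hV g * hV x * (hV g)⁻¹ = c * hV x * c⁻¹ := by
    intro x
    have h1 := inter w x
    rw [hconj x, map_mul, map_mul, map_inv] at h1
    exact h1
  set D : V := c⁻¹ * hV g with hD
  have hcomm : ∀ x : JGroup, D * hV x = hV x * D := by
    intro x
    have h2 := hmain x
    calc D * hV x = c⁻¹ * (hV g * hV x * (hV g)⁻¹) * hV g := by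
          rw [hD]; group
      _ = c⁻¹ * (c * hV x * c⁻¹) * hV g := by rw [h2]
      _ = hV x * D := by rw [hD]; group
  -- components of D
  have hab : hV (Ja * Jb) = ⟨Multiplicative.ofAdd ![1, 0], 1⟩ := by
    rw [map_mul, hV_a, hV_b, gA, gB_eq, mk_mul]
    refine SemidirectProduct.ext ?_ ?_
    · show Multiplicative.ofAdd _ = Multiplicative.ofAdd _
      congr 1
      funext i
      fin_cases i <;> simp [Units.val_neg, Matrix.neg_mulVec]
    · show (-1 : Gm) * -1 = 1
      simp
  have hbc : hV (Jb * Jc) = ⟨Multiplicative.ofAdd ![0, 1], 1⟩ := by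
    rw [map_mul, hV_b, hV_c, gB_eq, gC, mk_mul]
    refine SemidirectProduct.ext ?_ ?_
    · show Multiplicative.ofAdd _ = Multiplicative.ofAdd _
      congr 1
      funext i
      fin_cases i <;> simp [Units.val_neg, Matrix.neg_mulVec]
    · show (-1 : Gm) * -1 = 1
      simp
  have fixvec : ∀ (u : Fin 2 → ℤ) (x : JGroup), hV x = ⟨Multiplicative.ofAdd u, 1⟩ →
      D.right.val *ᵥ u = u := by
    intro u x hu
    have h3 := hcomm x
    rw [hu] at h3
    have h4 := congrArg SemidirectProduct.left h3
    simp only [SemidirectProduct.mul_left, map_one, MulAut.one_apply] at h4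
    have h5 : phi D.right (Multiplicative.ofAdd u) = Multiplicative.ofAdd u := by
      rw [mul_comm (Multiplicative.ofAdd u) D.left] at h4
      exact mul_left_cancel h4
    rw [phi_ofAdd] at h5
    exact Multiplicative.ofAdd.injective h5
  have hTe1 := fixvec ![1, 0] (Ja * Jb) hab
  have hTe2 := fixvec ![0, 1] (Jb * Jc) hbc
  have hT : D.right = 1 := by
    apply Units.ext
    funext i j
    have t1 := congrFun hTe1 i
    have t2 := congrFun hTe2 i
    simp only [Matrix.mulVec, dotProduct, Fin.sum_univ_two] at t1 t2
    fin_cases i <;> fin_cases j <;> simp_all [Matrix.one_apply]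
  have hL : D.left = 1 := by
    have h6 := hcomm Jb
    rw [hV_b] at h6
    have h7 := congrArg SemidirectProduct.left h6
    simp only [SemidirectProduct.mul_left, show gB.left = 1 from rfl,
      show gB.right = -1 from rfl, map_one, MulAut.one_apply, one_mul, mul_one] at h7
    -- h7 : D.left = phi (-1) D.left
    have h8 : D.left = Multiplicative.ofAdd (-(D.left.toAdd)) := by
      rw [← phi_neg_one]
      exact h7
    have h9 : D.left.toAdd = 0 := by
      funext i
      have := congrFun (congrArg Multiplicative.toAdd h8) i
      simp only [toAdd_ofAdd, Pi.neg_apply] at this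
      simp only [Pi.zero_apply]
      omega
    have : D.left = Multiplicative.ofAdd (D.left.toAdd) := rfl
    rw [this, h9, ofAdd_zero]
  have hDone : D = 1 := by
    refine SemidirectProduct.ext ?_ ?_
    · exact hL
    · exact hT
  have hVg : c = hV g := by
    rw [← inv_mul_eq_one, ← hD, hDone]
  have hrw : SemidirectProduct.rightHom (hV g) = Mhom w := by
    rw [← hVg]
    rfl
  have hr := rightHom_hV_mem g
  rw [hrw] at hr
  obtain ⟨k, hk⟩ := Subgroup.mem_zpowers_iff.mp hr
  rcases Int.even_or_odd k with ⟨m, hm⟩ | ⟨m, hm⟩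
  · have h10 : Mhom w = 1 := by
      rw [← hk, hm, show m + m = 2 * m by ring, zpow_mul,
        show ((-1 : Gm) ^ (2 : ℤ)) = 1 by rw [zpow_two]; simp, one_zpow]
    exact Minj (by rw [h10, map_one])
  · exfalso
    apply Mhom_ne_neg_one w
    rw [← hk, hm, zpow_add, zpow_one, zpow_mul,
      show ((-1 : Gm) ^ (2 : ℤ)) = 1 by rw [zpow_two]; simp, one_zpow, one_mul]


end OutJ

/-- **Levitt, Section 6.** In `J = ⟨a,b,c | a² = b², b² = c²⟩`, the automorphism `α` fixing
`a, b` and conjugating `c` by `ba`, and the automorphism `β` fixing `b, c` and conjugating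
`a` by `bc`, have images in `Out J` generating a free subgroup of rank 2; in particular
`Out J` contains a nonabelian free group. -/
theorem out_J_contains_free : ∃ α β : MulAut JGroup,
    α Ja = Ja ∧ α Jb = Jb ∧ α Jc = (Jb * Ja) * Jc * (Jb * Ja)⁻¹ ∧
    β Jb = Jb ∧ β Jc = Jc ∧ β Ja = (Jb * Jc) * Ja * (Jb * Jc)⁻¹ ∧
    Function.Injective
      (FreeGroup.lift (fun i : Fin 2 => if i = 0 then toOut JGroup α else toOut JGroup β) :
        FreeGroup (Fin 2) →* Out JGroup) ∧
    ∃ H : Subgroup (Out JGroup), Nonempty (H ≃* FreeGroup (Fin 2)) := by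
  refine ⟨OutJ.alpha, OutJ.beta, OutJ.alpha_a, OutJ.alpha_b, OutJ.alpha_c,
    OutJ.beta_b, OutJ.beta_c, OutJ.beta_a, OutJ.key, ?_⟩
  exact ⟨(FreeGroup.lift (fun i : Fin 2 =>
      if i = 0 then toOut JGroup OutJ.alpha else toOut JGroup OutJ.beta)).range,
    ⟨(MonoidHom.ofInjective OutJ.key).symm⟩⟩
end
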